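/- Let q, ℓ, m, n be natural numbers with m, n ≥ ℓ and m + n ≥ 2ℓ + 1. If G is a bipartite graph with parts of sizes m and n containing no (ℓ+1)-connected subgraph on at least q vertices, then e(G) ≤ q(n-ℓ)(m-ℓ)/(m+n-2ℓ) + (ℓ² + ℓ)(m + n - 2ℓ). -/

import Mathlib

def IsKConnected {V : Type*} (k : ℕ) (G : SimpleGraph V) : Prop :=
  k < Nat.card V ∧ ∀ S : Set V, S.ncard < k → (G.induce Sᶜ).Connected

noncomputable def Freal (Q L a b : ℝ) : ℝ :=
  Q * (a - L) * (b - L) / (a + b - 2 * L) + (L ^ 2 + L) * (a + b - 2 * L)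

lemma g_superadd {x1 y1 x2 y2 : ℝ} (hx1 : 0 < x1) (hy1 : 0 < y1) (hx2 : 0 < x2)
    (hy2 : 0 < y2) :
    x1 * y1 / (x1 + y1) + x2 * y2 / (x2 + y2)
      ≤ (x1 + x2) * (y1 + y2) / (x1 + x2 + (y1 + y2)) := by
  rw [div_add_div _ _ (by positivity) (by positivity), div_le_div_iff₀ (by positivity) (by positivity)]
  nlinarith [sq_nonneg (x1 * y2 - x2 * y1), mul_pos hx1 hy1, mul_pos hx2 hy2,
    mul_pos (mul_pos hx1 hy1) (mul_pos hx2 hy2)]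

lemma g_mono {x y X Y : ℝ} (hx : 0 < x) (hy : 0 < y) (hX : x ≤ X) (hY : y ≤ Y) :
    x * y / (x + y) ≤ X * Y / (X + Y) := by
  rw [div_le_div_iff₀ (by positivity) (by linarith)]
  nlinarith [mul_nonneg (mul_nonneg hx.le (hx.le.trans hX)) (by linarith : (0:ℝ) ≤ Y - y),
    mul_nonneg (mul_nonneg hy.le (hy.le.trans hY)) (by linarith : (0:ℝ) ≤ X - x)]

lemma g_combined {x1 y1 x2 y2 X Y : ℝ} (hx1 : 0 < x1) (hy1 : 0 < y1) (hx2 : 0 < x2)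
    (hy2 : 0 < y2) (hX : x1 + x2 ≤ X) (hY : y1 + y2 ≤ Y) :
    x1 * y1 / (x1 + y1) + x2 * y2 / (x2 + y2) ≤ X * Y / (X + Y) :=
  (g_superadd hx1 hy1 hx2 hy2).trans (g_mono (by linarith) (by linarith) hX hY)

lemma arith_split {Q L a b a1 b1 a2 b2 : ℝ} (hQ : 0 ≤ Q) (hL : 0 ≤ L)
    (h1 : L + 1 ≤ a1) (h2 : L + 1 ≤ b1) (h3 : L + 1 ≤ a2) (h4 : L + 1 ≤ b2)
    (ha : a1 + a2 ≤ a + L) (hb : b1 + b2 ≤ b + L) :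
    Freal Q L a1 b1 + Freal Q L a2 b2 ≤ Freal Q L a b := by
  unfold Freal
  have key : (a1 - L) * (b1 - L) / (a1 + b1 - 2 * L) + (a2 - L) * (b2 - L) / (a2 + b2 - 2 * L)
      ≤ (a - L) * (b - L) / (a + b - 2 * L) := by
    have := g_combined (x1 := a1 - L) (y1 := b1 - L) (x2 := a2 - L) (y2 := b2 - L)
      (X := a - L) (Y := b - L) (by linarith) (by linarith) (by linarith) (by linarith)
      (by linarith) (by linarith)
    convert this using 2 <;> ring
  have h5 : (L ^ 2 + L) * (a1 + b1 - 2 * L) + (L ^ 2 + L) * (a2 + b2 - 2 * L)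
      ≤ (L ^ 2 + L) * (a + b - 2 * L) := by nlinarith
  have h6 : Q * (a1 - L) * (b1 - L) / (a1 + b1 - 2 * L) + Q * (a2 - L) * (b2 - L) / (a2 + b2 - 2 * L)
      ≤ Q * (a - L) * (b - L) / (a + b - 2 * L) := by
    have := mul_le_mul_of_nonneg_left key hQ
    calc Q * (a1 - L) * (b1 - L) / (a1 + b1 - 2 * L) + Q * (a2 - L) * (b2 - L) / (a2 + b2 - 2 * L)
        = Q * ((a1 - L) * (b1 - L) / (a1 + b1 - 2 * L) + (a2 - L) * (b2 - L) / (a2 + b2 - 2 * L)) := by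
          ring
      _ ≤ Q * ((a - L) * (b - L) / (a + b - 2 * L)) := this
      _ = Q * (a - L) * (b - L) / (a + b - 2 * L) := by ring
  linarith

lemma arith_delete {Q L a b d : ℝ} (hQ : 0 ≤ Q) (hL : 0 ≤ L)
    (ha : L + 1 ≤ a) (hb : L + 1 ≤ b)
    (hd : d ≤ Q * (b - L) ^ 2 / ((a + b - 2 * L) * (a + b - 2 * L - 1)) + (L ^ 2 + L)) :
    Freal Q L (a - 1) b + d ≤ Freal Q L a b := by
  unfold Freal
  have hs : (0:ℝ) < a + b - 2 * L := by linarith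
  have hs1 : (0:ℝ) < a + b - 2 * L - 1 := by linarith
  have heq : Q * (a - L) * (b - L) / (a + b - 2 * L) + (L ^ 2 + L) * (a + b - 2 * L)
      - (Q * (a - 1 - L) * (b - L) / (a - 1 + b - 2 * L) + (L ^ 2 + L) * (a - 1 + b - 2 * L))
      = Q * (b - L) ^ 2 / ((a + b - 2 * L) * (a + b - 2 * L - 1)) + (L ^ 2 + L) := by
    have h1 : a + b - 2 * L ≠ 0 := ne_of_gt hs
    have h2 : a - 1 + b - 2 * L ≠ 0 := by intro h; apply ne_of_gt hs1; linarith
    have h3 : a + b - 2 * L - 1 ≠ 0 := ne_of_gt hs1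
    rw [div_add' _ _ _ h1, div_add' _ _ _ h2, div_sub_div _ _ h1 h2, div_add' _ _ _ (mul_ne_zero h1 h3),
      div_eq_div_iff (mul_ne_zero h1 h2) (mul_ne_zero h1 h3)]
    ring
  linarith

lemma arith_final {Q L a b : ℝ} (hL : 0 ≤ L) (ha : L + 1 ≤ a) (hb : L + 1 ≤ b)
    (hq : a + b ≤ Q) : a * b ≤ Freal Q L a b := by
  unfold Freal
  have hs : (0:ℝ) < a + b - 2 * L := by linarith
  have h2 : (a * b - (L ^ 2 + L) * (a + b - 2 * L)) * (a + b - 2 * L)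
      ≤ (a + b) * ((a - L) * (b - L)) := by
    nlinarith [mul_nonneg (mul_nonneg hL (by linarith : (0:ℝ) ≤ a - L))
        (by linarith : (0:ℝ) ≤ b - L),
      mul_nonneg (mul_nonneg (mul_nonneg hL hL) (by linarith : (0:ℝ) ≤ a + b - 2 * L))
        (by linarith : (0:ℝ) ≤ a + b - 2 * L - 1)]
  have h3 : a * b - (L ^ 2 + L) * (a + b - 2 * L) ≤ (a + b) * ((a - L) * (b - L)) / (a + b - 2 * L) :=
    (le_div_iff₀ hs).2 h2
  have hnn : 0 ≤ (a - L) * (b - L) / (a + b - 2 * L) :=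
    div_nonneg (mul_nonneg (by linarith : (0:ℝ) ≤ a - L) (by linarith : (0:ℝ) ≤ b - L)) hs.le
  have h4 : (a + b) * ((a - L) * (b - L) / (a + b - 2 * L))
      ≤ Q * ((a - L) * (b - L) / (a + b - 2 * L)) := mul_le_mul_of_nonneg_right hq hnn
  have e1 : (a + b) * ((a - L) * (b - L)) / (a + b - 2 * L)
      = (a + b) * ((a - L) * (b - L) / (a + b - 2 * L)) := by ring
  have e2 : Q * (a - L) * (b - L) / (a + b - 2 * L)
      = Q * ((a - L) * (b - L) / (a + b - 2 * L)) := by ring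
  linarith

open Set

section Combi

variable {V : Type*} [Fintype V]

/-- The set of "oriented" edges of `G` inside `A`, with first coordinate in `M`,
second in `N`. -/
def bp (G : SimpleGraph V) (M N A : Set V) : Set (V × V) :=
  {p | p.1 ∈ M ∧ p.1 ∈ A ∧ p.2 ∈ N ∧ p.2 ∈ A ∧ G.Adj p.1 p.2}

variable (G : SimpleGraph V) (M N : Set V)

lemma bp_le_mul (A : Set V) :
    (bp G M N A).ncard ≤ (M ∩ A).ncard * (N ∩ A).ncard := by
  have hsub : bp G M N A ⊆ (M ∩ A) ×ˢ (N ∩ A) := by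
    rintro ⟨x, y⟩ ⟨h1, h2, h3, h4, h5⟩
    exact ⟨⟨h1, h2⟩, ⟨h3, h4⟩⟩
  have h1 : (bp G M N A).ncard ≤ ((M ∩ A) ×ˢ (N ∩ A)).ncard :=
    ncard_le_ncard hsub (toFinite _)
  have h2 : ((M ∩ A) ×ˢ (N ∩ A)).ncard = (M ∩ A).ncard * (N ∩ A).ncard := by
    rw [← Nat.card_coe_set_eq, ← Nat.card_coe_set_eq, ← Nat.card_coe_set_eq]
    rw [Nat.card_congr (Equiv.Set.prod _ _), Nat.card_prod]
  omega

lemma bp_delete_M (hdisj : Disjoint M N) (A : Set V) (v : V) (hv : v ∈ M) :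
    (bp G M N A).ncard ≤ (bp G M N (A \ {v})).ncard + (G.neighborSet v ∩ A).ncard := by
  have hsub : bp G M N A ⊆ bp G M N (A \ {v}) ∪ ((fun y => (v, y)) '' (G.neighborSet v ∩ A)) := by
    rintro ⟨x, y⟩ ⟨h1, h2, h3, h4, h5⟩
    by_cases hx : x = v
    · right
      exact ⟨y, ⟨by rw [← hx]; exact h5, h4⟩, by rw [hx]⟩
    · left
      have hy : y ≠ v := fun h => (disjoint_left.mp hdisj hv) (h ▸ h3)
      exact ⟨h1, ⟨h2, hx⟩, h3, ⟨h4, hy⟩, h5⟩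
  calc (bp G M N A).ncard
      ≤ (bp G M N (A \ {v}) ∪ ((fun y => (v, y)) '' (G.neighborSet v ∩ A))).ncard :=
        ncard_le_ncard hsub (toFinite _)
    _ ≤ (bp G M N (A \ {v})).ncard + ((fun y => (v, y)) '' (G.neighborSet v ∩ A)).ncard :=
        ncard_union_le _ _
    _ ≤ (bp G M N (A \ {v})).ncard + (G.neighborSet v ∩ A).ncard := by
        have := ncard_image_le (f := fun y => (v, y)) (s := G.neighborSet v ∩ A) (toFinite _)
        omega

lemma bp_delete_N (hdisj : Disjoint M N) (A : Set V) (v : V) (hv : v ∈ N) :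
    (bp G M N A).ncard ≤ (bp G M N (A \ {v})).ncard + (G.neighborSet v ∩ A).ncard := by
  have hsub : bp G M N A ⊆ bp G M N (A \ {v}) ∪ ((fun x => (x, v)) '' (G.neighborSet v ∩ A)) := by
    rintro ⟨x, y⟩ ⟨h1, h2, h3, h4, h5⟩
    by_cases hy : y = v
    · right
      exact ⟨x, ⟨by rw [← hy]; exact h5.symm, h2⟩, by rw [hy]⟩
    · left
      have hx : x ≠ v := fun h => (disjoint_left.mp hdisj h1) (h ▸ hv)
      exact ⟨h1, ⟨h2, hx⟩, h3, ⟨h4, hy⟩, h5⟩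
  calc (bp G M N A).ncard
      ≤ (bp G M N (A \ {v}) ∪ ((fun x => (x, v)) '' (G.neighborSet v ∩ A))).ncard :=
        ncard_le_ncard hsub (toFinite _)
    _ ≤ (bp G M N (A \ {v})).ncard + ((fun x => (x, v)) '' (G.neighborSet v ∩ A)).ncard :=
        ncard_union_le _ _
    _ ≤ (bp G M N (A \ {v})).ncard + (G.neighborSet v ∩ A).ncard := by
        have := ncard_image_le (f := fun x => (x, v)) (s := G.neighborSet v ∩ A) (toFinite _)
        omega

lemma bp_split {A C1 C2 S' : Set V} (hA : A ⊆ C1 ∪ C2 ∪ S')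
    (hsep : ∀ x ∈ C1, ∀ y ∈ C2, ¬ G.Adj x y) :
    (bp G M N A).ncard ≤ (bp G M N (C1 ∪ S')).ncard + (bp G M N (C2 ∪ S')).ncard := by
  have hsub : bp G M N A ⊆ bp G M N (C1 ∪ S') ∪ bp G M N (C2 ∪ S') := by
    rintro ⟨x, y⟩ ⟨h1, h2, h3, h4, h5⟩
    rcases hA h2 with (hx | hx) | hx
    · rcases hA h4 with (hy | hy) | hy
      · exact Or.inl ⟨h1, Or.inl hx, h3, Or.inl hy, h5⟩
      · exact absurd h5 (hsep x hx y hy)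
      · exact Or.inl ⟨h1, Or.inl hx, h3, Or.inr hy, h5⟩
    · rcases hA h4 with (hy | hy) | hy
      · exact absurd h5.symm (hsep y hy x hx)
      · exact Or.inr ⟨h1, Or.inl hx, h3, Or.inl hy, h5⟩
      · exact Or.inr ⟨h1, Or.inl hx, h3, Or.inr hy, h5⟩
    · rcases hA h4 with (hy | hy) | hy
      · exact Or.inl ⟨h1, Or.inr hx, h3, Or.inl hy, h5⟩
      · exact Or.inr ⟨h1, Or.inr hx, h3, Or.inl hy, h5⟩
      · exact Or.inl ⟨h1, Or.inr hx, h3, Or.inr hy, h5⟩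
  exact (ncard_le_ncard hsub (toFinite _)).trans (ncard_union_le _ _)

lemma edgeSet_ncard_eq_bp (hdisj : Disjoint M N)
    (hbip : ∀ a b, G.Adj a b → (a ∈ M ∧ b ∈ N) ∨ (a ∈ N ∧ b ∈ M)) :
    G.edgeSet.ncard = (bp G M N univ).ncard := by
  have himg : (fun p : V × V => s(p.1, p.2)) '' bp G M N univ = G.edgeSet := by
    ext e
    refine Sym2.ind (fun x y => ?_) e
    constructor
    · rintro ⟨⟨a, b⟩, ⟨h1, -, h3, -, h5⟩, he⟩
      rw [← he]
      exact h5
    · intro he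
      rcases hbip x y he with ⟨hx, hy⟩ | ⟨hx, hy⟩
      · exact ⟨(x, y), ⟨hx, trivial, hy, trivial, he⟩, rfl⟩
      · exact ⟨(y, x), ⟨hy, trivial, hx, trivial, he.symm⟩, Sym2.eq_swap⟩
  have hinj : InjOn (fun p : V × V => s(p.1, p.2)) (bp G M N univ) := by
    rintro ⟨a, b⟩ ⟨h1, -, h3, -, -⟩ ⟨c, d⟩ ⟨h1', -, h3', -, -⟩ h
    simp only [Sym2.eq, Sym2.rel_iff', Prod.mk.injEq, Prod.swap_prod_mk] at h
    rcases h with ⟨rfl, rfl⟩ | ⟨rfl, rfl⟩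
    · rfl
    · exact absurd h1 (disjoint_right.mp hdisj h3')
  rw [← himg, ncard_image_of_injOn hinj]

end Combi

lemma induce_induce_connected {V : Type*} (G : SimpleGraph V) (A : Set V) (S : Set ↥A)
    (h : (G.induce (A \ (Subtype.val '' S))).Connected) :
    ((G.induce A).induce Sᶜ).Connected := by
  have hmap : ∀ x : ↥(A \ (Subtype.val '' S)), (⟨x.1, x.2.1⟩ : ↥A) ∈ Sᶜ := by
    rintro ⟨x, hxA, hxS⟩ hmem
    exact hxS ⟨⟨x, hxA⟩, hmem, rfl⟩
  let f : G.induce (A \ (Subtype.val '' S)) →g (G.induce A).induce Sᶜ :=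
    { toFun := fun x => ⟨⟨x.1, x.2.1⟩, hmap x⟩
      map_rel' := fun hadj => hadj }
  have hsurj : Function.Surjective f := by
    rintro ⟨⟨v, hvA⟩, hvS⟩
    refine ⟨⟨v, hvA, ?_⟩, rfl⟩
    rintro ⟨w, hwS, hwval⟩
    exact hvS (by rwa [show (⟨v, hvA⟩ : ↥A) = w from Subtype.ext hwval.symm])
  exact h.map f hsurj


lemma Freal_comm (Q L a b : ℝ) : Freal Q L a b = Freal Q L b a := by
  unfold Freal; ring

lemma key {V : Type*} [Fintype V] (q ℓ : ℕ) (G : SimpleGraph V) (M N : Set V)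
    (hpart : M ∪ N = univ) (hdisj : Disjoint M N)
    (hbip : ∀ a b, G.Adj a b → (a ∈ M ∧ b ∈ N) ∨ (a ∈ N ∧ b ∈ M))
    (hno : ∀ A : Set V, IsKConnected (ℓ + 1) (G.induce A) → A.ncard < q) :
    ∀ k : ℕ, ∀ A : Set V, A.ncard = k → ℓ ≤ (M ∩ A).ncard → ℓ ≤ (N ∩ A).ncard →
      2 * ℓ + 1 ≤ (M ∩ A).ncard + (N ∩ A).ncard →
      ((bp G M N A).ncard : ℝ) ≤
        Freal (q : ℝ) (ℓ : ℝ) (((M ∩ A).ncard : ℕ) : ℝ) (((N ∩ A).ncard : ℕ) : ℝ) := by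
  intro k
  induction k using Nat.strong_induction_on with
  | _ k IH =>
  intro A hAk hMa hNa hsum
  by_contra hcon
  push_neg at hcon
  set a := (M ∩ A).ncard with ha_def
  set b := (N ∩ A).ncard with hb_def
  have hQ0 : (0:ℝ) ≤ (q:ℝ) := Nat.cast_nonneg q
  have hL0 : (0:ℝ) ≤ (ℓ:ℝ) := Nat.cast_nonneg ℓ
  -- partition cardinality
  have hpartcard : ∀ X : Set V, (M ∩ X).ncard + (N ∩ X).ncard = X.ncard := by
    intro X
    rw [← ncard_union_eq (hdisj.mono inter_subset_left inter_subset_left)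
      (toFinite _) (toFinite _)]
    congr 1
    rw [← union_inter_distrib_right, hpart, univ_inter]
  have hab : a + b = A.ncard := hpartcard A
  have htriv : ((bp G M N A).ncard : ℝ) ≤ (a : ℝ) * (b : ℝ) := by
    have := bp_le_mul G M N A
    calc ((bp G M N A).ncard : ℝ) ≤ ((a * b : ℕ) : ℝ) := by exact_mod_cast this
      _ = (a : ℝ) * (b : ℝ) := by push_cast; ring
  -- step 0 : a, b ≥ ℓ + 1
  have ha1 : ℓ + 1 ≤ a := by
    by_contra hlt
    have haeq : a = ℓ := by omega
    have hbℓ : ℓ + 1 ≤ b := by omega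
    have haR : (a : ℝ) = (ℓ : ℝ) := by exact_mod_cast haeq
    have hbR : (ℓ : ℝ) + 1 ≤ (b : ℝ) := by exact_mod_cast hbℓ
    have hzero : (q:ℝ) * ((a:ℝ) - ℓ) * ((b:ℝ) - ℓ) / ((a:ℝ) + b - 2 * ℓ) = 0 := by
      rw [haR]; simp
    have : ((bp G M N A).ncard : ℝ) ≤ Freal (q:ℝ) (ℓ:ℝ) (a:ℝ) (b:ℝ) := by
      unfold Freal
      rw [hzero]
      nlinarith
    linarith
  have hb1 : ℓ + 1 ≤ b := by
    by_contra hlt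
    have hbeq : b = ℓ := by omega
    have haℓ : ℓ + 1 ≤ a := by omega
    have hbR : (b : ℝ) = (ℓ : ℝ) := by exact_mod_cast hbeq
    have haR : (ℓ : ℝ) + 1 ≤ (a : ℝ) := by exact_mod_cast haℓ
    have hzero : (q:ℝ) * ((a:ℝ) - ℓ) * ((b:ℝ) - ℓ) / ((a:ℝ) + b - 2 * ℓ) = 0 := by
      rw [hbR]; simp
    have : ((bp G M N A).ncard : ℝ) ≤ Freal (q:ℝ) (ℓ:ℝ) (a:ℝ) (b:ℝ) := by
      unfold Freal
      rw [hzero]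
      nlinarith
    linarith
  have ha1R : (ℓ:ℝ) + 1 ≤ (a:ℝ) := by exact_mod_cast ha1
  have hb1R : (ℓ:ℝ) + 1 ≤ (b:ℝ) := by exact_mod_cast hb1
  -- neighbors are on the other side
  have hnbrM : ∀ v ∈ M, ∀ X : Set V, G.neighborSet v ∩ X ⊆ N ∩ X := by
    intro v hv X y ⟨hy1, hy2⟩
    rcases hbip v y hy1 with ⟨-, h⟩ | ⟨h, -⟩
    · exact ⟨h, hy2⟩
    · exact absurd hv (disjoint_right.mp hdisj h)
  have hnbrN : ∀ v ∈ N, ∀ X : Set V, G.neighborSet v ∩ X ⊆ M ∩ X := by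
    intro v hv X y ⟨hy1, hy2⟩
    rcases hbip v y hy1 with ⟨h, -⟩ | ⟨-, h⟩
    · exact absurd hv (disjoint_left.mp hdisj h)
    · exact ⟨h, hy2⟩
  -- minimum degree, M side
  have hdegM : ∀ v ∈ M ∩ A,
      (q:ℝ) * ((b:ℝ) - ℓ) ^ 2 / ((((a:ℝ) + b - 2 * ℓ)) * ((a:ℝ) + b - 2 * ℓ - 1)) +
        ((ℓ:ℝ) ^ 2 + ℓ) < ((G.neighborSet v ∩ A).ncard : ℝ) := by
    intro v hv
    by_contra hd
    push_neg at hd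
    have hvM : v ∈ M := hv.1
    have hvA : v ∈ A := hv.2
    have hMA' : M ∩ (A \ {v}) = (M ∩ A) \ {v} := by
      ext x; simp only [mem_inter_iff, mem_diff, mem_singleton_iff]; tauto
    have hNA' : N ∩ (A \ {v}) = N ∩ A := by
      ext x
      simp only [mem_inter_iff, mem_diff, mem_singleton_iff]
      constructor
      · tauto
      · rintro ⟨hxN, hxA⟩
        exact ⟨hxN, hxA, fun h => (disjoint_left.mp hdisj hvM) (h ▸ hxN)⟩
    have hAk' : (A \ {v}).ncard = k - 1 := by
      rw [ncard_diff_singleton_of_mem hvA, hAk]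
    have hk1 : 1 ≤ k := by omega
    have haM' : (M ∩ (A \ {v})).ncard = a - 1 := by
      rw [hMA', ncard_diff_singleton_of_mem hv]
    have hbN' : (N ∩ (A \ {v})).ncard = b := by rw [hNA']
    have hres := IH (k - 1) (by omega) (A \ {v}) hAk'
      (by rw [haM']; omega)
      (by rw [hbN']; omega) (by rw [haM', hbN']; omega)
    rw [haM', hbN'] at hres
    have hcast : ((a - 1 : ℕ) : ℝ) = (a:ℝ) - 1 := by
      rw [Nat.cast_sub (by omega : 1 ≤ a), Nat.cast_one]
    rw [hcast] at hres
    have hdel := bp_delete_M G M N hdisj A v hvM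
    have hdelR : ((bp G M N A).ncard : ℝ) ≤
        ((bp G M N (A \ {v})).ncard : ℝ) + ((G.neighborSet v ∩ A).ncard : ℝ) := by
      exact_mod_cast hdel
    have harith := arith_delete (Q := (q:ℝ)) (L := (ℓ:ℝ)) (a := (a:ℝ)) (b := (b:ℝ))
      (d := ((G.neighborSet v ∩ A).ncard : ℝ)) hQ0 hL0 ha1R hb1R (by linarith)
    linarith
  -- minimum degree, N side
  have hdegN : ∀ v ∈ N ∩ A,
      (q:ℝ) * ((a:ℝ) - ℓ) ^ 2 / ((((a:ℝ) + b - 2 * ℓ)) * ((a:ℝ) + b - 2 * ℓ - 1)) +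
        ((ℓ:ℝ) ^ 2 + ℓ) < ((G.neighborSet v ∩ A).ncard : ℝ) := by
    intro v hv
    by_contra hd
    push_neg at hd
    have hvN : v ∈ N := hv.1
    have hvA : v ∈ A := hv.2
    have hNA' : N ∩ (A \ {v}) = (N ∩ A) \ {v} := by
      ext x; simp only [mem_inter_iff, mem_diff, mem_singleton_iff]; tauto
    have hMA' : M ∩ (A \ {v}) = M ∩ A := by
      ext x
      simp only [mem_inter_iff, mem_diff, mem_singleton_iff]
      constructor
      · tauto
      · rintro ⟨hxM, hxA⟩
        exact ⟨hxM, hxA, fun h => (disjoint_left.mp hdisj hxM) (h ▸ hvN)⟩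
    have hAk' : (A \ {v}).ncard = k - 1 := by
      rw [ncard_diff_singleton_of_mem hvA, hAk]
    have hbN' : (N ∩ (A \ {v})).ncard = b - 1 := by
      rw [hNA', ncard_diff_singleton_of_mem hv]
    have haM' : (M ∩ (A \ {v})).ncard = a := by rw [hMA']
    have hres := IH (k - 1) (by omega) (A \ {v}) hAk'
      (by rw [haM']; omega) (by rw [hbN']; omega) (by rw [haM', hbN']; omega)
    rw [haM', hbN'] at hres
    have hcast : ((b - 1 : ℕ) : ℝ) = (b:ℝ) - 1 := by
      rw [Nat.cast_sub (by omega : 1 ≤ b), Nat.cast_one]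
    rw [hcast] at hres
    have hdel := bp_delete_N G M N hdisj A v hvN
    have hdelR : ((bp G M N A).ncard : ℝ) ≤
        ((bp G M N (A \ {v})).ncard : ℝ) + ((G.neighborSet v ∩ A).ncard : ℝ) := by
      exact_mod_cast hdel
    have harith := arith_delete (Q := (q:ℝ)) (L := (ℓ:ℝ)) (a := (b:ℝ)) (b := (a:ℝ))
      (d := ((G.neighborSet v ∩ A).ncard : ℝ)) hQ0 hL0 hb1R ha1R
      (by rw [show (b:ℝ) + a - 2*ℓ = (a:ℝ) + b - 2*ℓ by ring]; linarith)
    rw [Freal_comm (q:ℝ) (ℓ:ℝ) ((b:ℝ) - 1) (a:ℝ)] at harith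
    rw [Freal_comm (q:ℝ) (ℓ:ℝ) (b:ℝ) (a:ℝ)] at harith
    linarith
  -- weak min degree
  have hsR : (2:ℝ) ≤ (a:ℝ) + b - 2 * ℓ := by linarith
  have hfrac_nonneg : (0:ℝ) ≤ (q:ℝ) * ((b:ℝ) - ℓ) ^ 2 /
      ((((a:ℝ) + b - 2 * ℓ)) * ((a:ℝ) + b - 2 * ℓ - 1)) :=
    div_nonneg (by positivity) (mul_nonneg (by linarith) (by linarith))
  have hfrac_nonneg' : (0:ℝ) ≤ (q:ℝ) * ((a:ℝ) - ℓ) ^ 2 /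
      ((((a:ℝ) + b - 2 * ℓ)) * ((a:ℝ) + b - 2 * ℓ - 1)) :=
    div_nonneg (by positivity) (mul_nonneg (by linarith) (by linarith))
  have hdegM' : ∀ v ∈ M ∩ A, ℓ ^ 2 + ℓ + 1 ≤ (G.neighborSet v ∩ A).ncard := by
    intro v hv
    have h := hdegM v hv
    have : ((ℓ ^ 2 + ℓ : ℕ) : ℝ) < ((G.neighborSet v ∩ A).ncard : ℝ) := by push_cast; linarith
    exact_mod_cast this
  have hdegN' : ∀ v ∈ N ∩ A, ℓ ^ 2 + ℓ + 1 ≤ (G.neighborSet v ∩ A).ncard := by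
    intro v hv
    have h := hdegN v hv
    have : ((ℓ ^ 2 + ℓ : ℕ) : ℝ) < ((G.neighborSet v ∩ A).ncard : ℝ) := by push_cast; linarith
    exact_mod_cast this
  -- Step 2: A induces a (ℓ+1)-connected subgraph
  have hKC : IsKConnected (ℓ + 1) (G.induce A) := by
    constructor
    · rw [Nat.card_coe_set_eq]; omega
    · intro S hS
      set S' : Set V := Subtype.val '' S with hS'def
      have hS'A : S' ⊆ A := by rintro x ⟨y, -, rfl⟩; exact y.2
      have hS'card : S'.ncard ≤ ℓ := by
        rw [hS'def, ncard_image_of_injOn Subtype.val_injective.injOn]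
        omega
      apply induce_induce_connected
      by_contra hnc
      set W : Set V := A \ S' with hWdef
      have hWcard : W.ncard = A.ncard - S'.ncard := ncard_diff hS'A
      have hWpos : 0 < W.ncard := by omega
      have hWne : W.Nonempty := (ncard_pos (toFinite _)).mp hWpos
      have hWne' : Nonempty ↥W := hWne.to_subtype
      rw [SimpleGraph.connected_iff] at hnc
      push_neg at hnc
      have hpre : ¬ (G.induce W).Preconnected := fun hp => (hnc hp).false hWne'.some
      simp only [SimpleGraph.Preconnected, not_forall] at hpre
      obtain ⟨u, w, hR⟩ := hpre
      set C1 : Set V := {x | ∃ hx : x ∈ W, (G.induce W).Reachable u ⟨x, hx⟩} with hC1def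
      have hC1W : C1 ⊆ W := fun x hx => hx.choose
      set C2 : Set V := W \ C1 with hC2def
      have hC2W : C2 ⊆ W := diff_subset
      have huC1 : (u : V) ∈ C1 := ⟨u.2, SimpleGraph.Reachable.refl _⟩
      have hwW : (w : V) ∈ W := w.2
      have hwC1 : (w : V) ∉ C1 := by rintro ⟨hw', hr⟩; exact hR hr
      have hwC2 : (w : V) ∈ C2 := ⟨hwW, hwC1⟩
      have hcloseC1 : ∀ x ∈ C1, ∀ y ∈ W, G.Adj x y → y ∈ C1 := by
        rintro x ⟨hx, hr⟩ y hy hxy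
        exact ⟨hy, hr.trans (SimpleGraph.Adj.reachable
          (show (G.induce W).Adj ⟨x, hx⟩ ⟨y, hy⟩ from hxy))⟩
      have hsep : ∀ x ∈ C1, ∀ y ∈ C2, ¬ G.Adj x y := fun x hx y hy hxy =>
        hy.2 (hcloseC1 x hx y hy.1 hxy)
      have hcloseC2 : ∀ x ∈ C2, ∀ y ∈ W, G.Adj x y → y ∈ C2 := by
        intro x hx y hy hxy
        exact ⟨hy, fun hyC1 => hx.2 (hcloseC1 y hyC1 x hx.1 hxy.symm)⟩
      have hAsub : A ⊆ C1 ∪ C2 ∪ S' := by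
        intro x hx
        by_cases hxS : x ∈ S'
        · exact Or.inr hxS
        · by_cases hxC : x ∈ C1
          · exact Or.inl (Or.inl hxC)
          · exact Or.inl (Or.inr ⟨⟨hx, hxS⟩, hxC⟩)
      -- component sizes
      have hself : ℓ ≤ ℓ ^ 2 := Nat.le_self_pow (by norm_num) ℓ
      have hcomp : ∀ C : Set V, C ⊆ W → (∀ x ∈ C, ∀ y ∈ W, G.Adj x y → y ∈ C) →
          C.Nonempty → ℓ + 1 ≤ (M ∩ C).ncard ∧ ℓ + 1 ≤ (N ∩ C).ncard := by
        intro C hCW hclo hCne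
        have claimM : ∀ x ∈ M ∩ C, ℓ + 1 ≤ (N ∩ C).ncard := by
          intro x hx
          have hxA : x ∈ A := (hCW hx.2).1
          have hdeg := hdegM' x ⟨hx.1, hxA⟩
          have hsub : G.neighborSet x ∩ A ⊆ (N ∩ C) ∪ S' := by
            intro y hy
            have hyN : y ∈ N := (hnbrM x hx.1 A hy).1
            by_cases hyS : y ∈ S'
            · exact Or.inr hyS
            · exact Or.inl ⟨hyN, hclo x hx.2 y ⟨hy.2, hyS⟩ hy.1⟩
          have h1 : (G.neighborSet x ∩ A).ncard ≤ (N ∩ C).ncard + S'.ncard :=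
            (ncard_le_ncard hsub (toFinite _)).trans (ncard_union_le _ _)
          linarith
        have claimN : ∀ x ∈ N ∩ C, ℓ + 1 ≤ (M ∩ C).ncard := by
          intro x hx
          have hxA : x ∈ A := (hCW hx.2).1
          have hdeg := hdegN' x ⟨hx.1, hxA⟩
          have hsub : G.neighborSet x ∩ A ⊆ (M ∩ C) ∪ S' := by
            intro y hy
            have hyM : y ∈ M := (hnbrN x hx.1 A hy).1
            by_cases hyS : y ∈ S'
            · exact Or.inr hyS
            · exact Or.inl ⟨hyM, hclo x hx.2 y ⟨hy.2, hyS⟩ hy.1⟩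
          have h1 : (G.neighborSet x ∩ A).ncard ≤ (M ∩ C).ncard + S'.ncard :=
            (ncard_le_ncard hsub (toFinite _)).trans (ncard_union_le _ _)
          linarith
        obtain ⟨x0, hx0⟩ := hCne
        have hx0MN : x0 ∈ M ∪ N := by rw [hpart]; trivial
        rcases hx0MN with hx0M | hx0N
        · have hN := claimM x0 ⟨hx0M, hx0⟩
          obtain ⟨y0, hy0⟩ := (ncard_pos (toFinite _)).mp (show 0 < (N ∩ C).ncard by omega)
          exact ⟨claimN y0 hy0, hN⟩
        · have hM' := claimN x0 ⟨hx0N, hx0⟩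
          obtain ⟨y0, hy0⟩ := (ncard_pos (toFinite _)).mp (show 0 < (M ∩ C).ncard by omega)
          exact ⟨hM', claimM y0 hy0⟩
      have hcompC1 := hcomp C1 hC1W hcloseC1 ⟨(u : V), huC1⟩
      have hcompC2 := hcomp C2 hC2W hcloseC2 ⟨(w : V), hwC2⟩
      set B1 : Set V := C1 ∪ S' with hB1def
      set B2 : Set V := C2 ∪ S' with hB2def
      -- side counting
      have htS : (M ∩ S').ncard + (N ∩ S').ncard = S'.ncard := hpartcard S'
      have hMC1B1 : (M ∩ C1).ncard ≤ (M ∩ B1).ncard :=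
        ncard_le_ncard (inter_subset_inter_right M subset_union_left) (toFinite _)
      have hNC1B1 : (N ∩ C1).ncard ≤ (N ∩ B1).ncard :=
        ncard_le_ncard (inter_subset_inter_right N subset_union_left) (toFinite _)
      have hMC2B2 : (M ∩ C2).ncard ≤ (M ∩ B2).ncard :=
        ncard_le_ncard (inter_subset_inter_right M subset_union_left) (toFinite _)
      have hNC2B2 : (N ∩ C2).ncard ≤ (N ∩ B2).ncard :=
        ncard_le_ncard (inter_subset_inter_right N subset_union_left) (toFinite _)
      have hsideSum : ∀ P : Set V, (P ∩ B1).ncard + (P ∩ B2).ncard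
          ≤ (P ∩ A).ncard + (P ∩ S').ncard := by
        intro P
        have h1 : (P ∩ B1).ncard ≤ (P ∩ C1).ncard + (P ∩ S').ncard := by
          rw [hB1def, inter_union_distrib_left]
          exact ncard_union_le _ _
        have h2 : (P ∩ B2).ncard ≤ (P ∩ C2).ncard + (P ∩ S').ncard := by
          rw [hB2def, inter_union_distrib_left]
          exact ncard_union_le _ _
        have hd12 : Disjoint (P ∩ C1) (P ∩ C2) := by
          rw [disjoint_left]
          rintro x ⟨-, hx1⟩ ⟨-, hx2⟩
          exact hx2.2 hx1
        have h3 : (P ∩ C1).ncard + (P ∩ C2).ncard = ((P ∩ C1) ∪ (P ∩ C2)).ncard :=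
          (ncard_union_eq hd12 (toFinite _) (toFinite _)).symm
        have h4 : ((P ∩ C1) ∪ (P ∩ C2)).ncard ≤ (P ∩ W).ncard :=
          ncard_le_ncard (union_subset (inter_subset_inter_right P hC1W)
            (inter_subset_inter_right P hC2W)) (toFinite _)
        have hd5 : Disjoint (P ∩ W) (P ∩ S') := by
          rw [disjoint_left]
          rintro x ⟨-, hxW⟩ ⟨-, hxS⟩
          exact hxW.2 hxS
        have h5 : (P ∩ W).ncard + (P ∩ S').ncard = ((P ∩ W) ∪ (P ∩ S')).ncard :=
          (ncard_union_eq hd5 (toFinite _) (toFinite _)).symm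
        have h6 : ((P ∩ W) ∪ (P ∩ S')).ncard ≤ (P ∩ A).ncard :=
          ncard_le_ncard (union_subset (inter_subset_inter_right P diff_subset)
            (inter_subset_inter_right P hS'A)) (toFinite _)
        omega
      have hMs : (M ∩ S').ncard ≤ ℓ := by omega
      have hNs : (N ∩ S').ncard ≤ ℓ := by omega
      have hsideM := hsideSum M
      have hsideN := hsideSum N
      -- B1 is a proper subset of A
      have hB1subA : B1 ⊆ A := union_subset (hC1W.trans diff_subset) hS'A
      have hB2subA : B2 ⊆ A := union_subset (hC2W.trans diff_subset) hS'A
      have hB1ss : B1 ⊂ A := (ssubset_iff_of_subset hB1subA).2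
        ⟨(w : V), hwW.1, fun hw => hw.elim hwC1 hwW.2⟩
      have hB2ss : B2 ⊂ A := (ssubset_iff_of_subset hB2subA).2
        ⟨(u : V), u.2.1, fun hu => hu.elim (fun h => h.2 huC1) u.2.2⟩
      have hB1k : B1.ncard < k := hAk ▸ ncard_lt_ncard hB1ss (toFinite _)
      have hB2k : B2.ncard < k := hAk ▸ ncard_lt_ncard hB2ss (toFinite _)
      have hres1 := IH B1.ncard hB1k B1 rfl (by omega) (by omega) (by omega)
      have hres2 := IH B2.ncard hB2k B2 rfl (by omega) (by omega) (by omega)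
      have hsplit := bp_split G M N hAsub hsep
      have hsplitR : ((bp G M N A).ncard : ℝ) ≤
          ((bp G M N B1).ncard : ℝ) + ((bp G M N B2).ncard : ℝ) := by
        exact_mod_cast hsplit
      have harith := arith_split (Q := (q:ℝ)) (L := (ℓ:ℝ))
        (a := (a:ℝ)) (b := (b:ℝ))
        (a1 := ((M ∩ B1).ncard : ℝ)) (b1 := ((N ∩ B1).ncard : ℝ))
        (a2 := ((M ∩ B2).ncard : ℝ)) (b2 := ((N ∩ B2).ncard : ℝ))
        hQ0 hL0
        (by exact_mod_cast (show ℓ + 1 ≤ (M ∩ B1).ncard by omega))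
        (by exact_mod_cast (show ℓ + 1 ≤ (N ∩ B1).ncard by omega))
        (by exact_mod_cast (show ℓ + 1 ≤ (M ∩ B2).ncard by omega))
        (by exact_mod_cast (show ℓ + 1 ≤ (N ∩ B2).ncard by omega))
        (by exact_mod_cast (show (M ∩ B1).ncard + (M ∩ B2).ncard ≤ a + ℓ by omega))
        (by exact_mod_cast (show (N ∩ B1).ncard + (N ∩ B2).ncard ≤ b + ℓ by omega))
      linarith
  -- Step 3 : conclude
  have hqA : A.ncard < q := hno A hKC
  have hqR : (a:ℝ) + (b:ℝ) ≤ (q:ℝ) := by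
    have : a + b ≤ q := by omega
    exact_mod_cast this
  have hfin := arith_final (Q := (q:ℝ)) (L := (ℓ:ℝ)) (a := (a:ℝ)) (b := (b:ℝ))
    hL0 ha1R hb1R hqR
  linarith

theorem stmt8 {V : Type*} [Fintype V] (q ℓ m n : ℕ) (hm : ℓ ≤ m) (hn : ℓ ≤ n)
    (hmn : 2 * ℓ + 1 ≤ m + n)
    (G : SimpleGraph V) (M N : Set V)
    (hpart : M ∪ N = Set.univ) (hdisj : Disjoint M N)
    (hbip : ∀ a b, G.Adj a b → (a ∈ M ∧ b ∈ N) ∨ (a ∈ N ∧ b ∈ M))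
    (hM : M.ncard = m) (hN : N.ncard = n)
    (hno : ∀ A : Set V, IsKConnected (ℓ + 1) (G.induce A) → A.ncard < q) :
    (G.edgeSet.ncard : ℝ) ≤
      (q : ℝ) * ((n : ℝ) - ℓ) * ((m : ℝ) - ℓ) / ((m : ℝ) + n - 2 * ℓ)
        + ((ℓ : ℝ) ^ 2 + ℓ) * ((m : ℝ) + n - 2 * ℓ) := by
  have hMu : (M ∩ univ).ncard = m := by rw [inter_univ, hM]
  have hNu : (N ∩ univ).ncard = n := by rw [inter_univ, hN]
  have h := key q ℓ G M N hpart hdisj hbip hno (univ : Set V).ncard univ rfl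
    (by rw [hMu]; exact hm) (by rw [hNu]; exact hn) (by rw [hMu, hNu]; exact hmn)
  rw [hMu, hNu] at h
  rw [edgeSet_ncard_eq_bp G M N hdisj hbip]
  refine h.trans (le_of_eq ?_)
  unfold Freal
  rw [show (q:ℝ) * ((m:ℝ) - ℓ) * ((n:ℝ) - ℓ) = (q:ℝ) * ((n:ℝ) - ℓ) * ((m:ℝ) - ℓ) by ring]
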